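/- If G is a finite simple connected graph on 3 or more vertices, then |E(G)| < h(T(G)). -/

import Mathlib

/-- The primitive hole number of a simple graph: the number of triangles
(3-cliques) in the graph. -/
noncomputable def SimpleGraph.holeNumber {V : Type*} (G : SimpleGraph V) : ℕ :=
  {s : Finset V | G.IsNClique 3 s}.ncard

/-- The primitive degree of a vertex: the number of triangles (3-cliques)
of the graph containing that vertex. -/
noncomputable def SimpleGraph.primDegree {V : Type*} (G : SimpleGraph V) (v : V) : ℕ :=
  {s : Finset V | G.IsNClique 3 s ∧ v ∈ s}.ncard

/-- The total graph of a simple graph `G`: vertices are the vertices and edges of `G`,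
two of them adjacent iff the corresponding elements of `G` are adjacent or incident. -/
def SimpleGraph.totalGraph {V : Type*} (G : SimpleGraph V) :
    SimpleGraph (V ⊕ G.edgeSet) where
  Adj x y :=
    match x, y with
    | Sum.inl u, Sum.inl v => G.Adj u v
    | Sum.inl u, Sum.inr e => u ∈ (e : Sym2 V)
    | Sum.inr e, Sum.inl u => u ∈ (e : Sym2 V)
    | Sum.inr e, Sum.inr f => e ≠ f ∧ ∃ v, v ∈ (e : Sym2 V) ∧ v ∈ (f : Sym2 V)
  symm := by
    refine ⟨?_⟩
    rintro (u | e) (v | f) h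
    · exact G.adj_symm h
    · exact h
    · exact h
    · exact ⟨h.1.symm, h.2.imp fun v hv => ⟨hv.2, hv.1⟩⟩
  loopless := by
    refine ⟨?_⟩
    rintro (u | e) h
    · exact G.irrefl h
    · exact h.1 rfl

/-- Along a walk ending at `a`, starting outside `{a, b}`, there is an edge from a vertex
outside `{a, b}` to a vertex in `{a, b}`. -/
lemma exists_entry_edge {V : Type*} {G : SimpleGraph V} {a b : V} :
    ∀ {c : V}, G.Walk c a → c ≠ a → c ≠ b →
      ∃ x y, G.Adj x y ∧ x ≠ a ∧ x ≠ b ∧ (y = a ∨ y = b) := by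
  intro c p
  induction p with
  | nil => intro h _; exact absurd rfl h
  | @cons u d w h q ih =>
    intro hua hub
    by_cases hd : d = w ∨ d = b
    · exact ⟨u, d, h, hua, hub, hd⟩
    · push_neg at hd
      exact ih hd.1 hd.2

/-- A connected graph on at least 3 vertices has a path of length 2. -/
lemma exists_path_two {V : Type*} [Fintype V] (G : SimpleGraph V) (hconn : G.Connected)
    (hcard : 3 ≤ Fintype.card V) :
    ∃ x y z, G.Adj x y ∧ G.Adj y z ∧ x ≠ z := by
  classical
  haveI : Nontrivial V := Fintype.one_lt_card_iff_nontrivial.mp (by omega)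
  obtain ⟨a, b, hab⟩ := exists_pair_ne V
  -- get an adjacent pair
  obtain ⟨a, b, hadj⟩ : ∃ a b, G.Adj a b := by
    obtain ⟨p⟩ := hconn.preconnected a b
    cases p with
    | nil => exact absurd rfl hab
    | cons h q => exact ⟨_, _, h⟩
  -- get a third vertex
  obtain ⟨c, hc⟩ : ∃ c, c ∉ ({a, b} : Finset V) := by
    by_contra h
    push_neg at h
    have hsub : (Finset.univ : Finset V) ⊆ {a, b} := fun x _ => h x
    have := Finset.card_le_card hsub
    simp only [Finset.card_univ] at this
    have h2 : ({a, b} : Finset V).card ≤ 2 :=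
      (Finset.card_insert_le _ _).trans (by simp)
    omega
  simp only [Finset.mem_insert, Finset.mem_singleton, not_or] at hc
  obtain ⟨p⟩ := hconn.preconnected c a
  obtain ⟨x, y, hxy, hxa, hxb, hy⟩ := exists_entry_edge p hc.1 hc.2
  rcases hy with rfl | rfl
  · exact ⟨x, y, b, hxy, hadj, hxb⟩
  · exact ⟨x, y, a, hxy, hadj.symm, hxa⟩

/-- If `G` is a finite simple connected graph on at least `3` vertices, then
`|E(G)| < h(T(G))`. -/
theorem card_edgeSet_lt_holeNumber_totalGraph {V : Type*} [Fintype V]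
    (G : SimpleGraph V) (hconn : G.Connected) (hcard : 3 ≤ Fintype.card V) :
    G.edgeSet.ncard < G.totalGraph.holeNumber := by
  classical
  haveI : Fintype (V ⊕ G.edgeSet) := Fintype.ofFinite _
  set T : Set (Finset (V ⊕ G.edgeSet)) := {s | G.totalGraph.IsNClique 3 s} with hTdef
  -- the map sending an edge to its triangle in the total graph
  let f : G.edgeSet → Finset (V ⊕ G.edgeSet) := fun e =>
    Sym2.lift ⟨fun u v => ({Sum.inl u, Sum.inl v, Sum.inr e} : Finset (V ⊕ G.edgeSet)),
      fun u v => by simp [Finset.insert_comm]⟩ (e : Sym2 V)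
  have hf : ∀ e : G.edgeSet, ∃ u v, G.Adj u v ∧ (e : Sym2 V) = s(u, v) ∧
      f e = {Sum.inl u, Sum.inl v, Sum.inr e} := by
    rintro ⟨e, he⟩
    induction e with
    | _ u v => exact ⟨u, v, he, rfl, rfl⟩
  -- f is injective
  have hinj : Function.Injective f := by
    intro e e' heq
    obtain ⟨u, v, _, _, hfe⟩ := hf e
    obtain ⟨u', v', _, _, hfe'⟩ := hf e'
    have : (Sum.inr e : V ⊕ G.edgeSet) ∈ f e' := by
      rw [← heq, hfe]; simp
    rw [hfe'] at this
    simpa using this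
  -- range f ⊆ T
  have hrange : Set.range f ⊆ T := by
    rintro s ⟨e, rfl⟩
    obtain ⟨u, v, huv, hev, hfe⟩ := hf e
    rw [hTdef, Set.mem_setOf_eq, hfe, SimpleGraph.is3Clique_triple_iff]
    refine ⟨huv, ?_, ?_⟩
    · show u ∈ (e : Sym2 V); rw [hev]; simp
    · show v ∈ (e : Sym2 V); rw [hev]; simp
  -- the extra triangle
  obtain ⟨x, y, z, hxy, hyz, hxz⟩ := exists_path_two G hconn hcard
  set e₁ : G.edgeSet := ⟨s(x, y), hxy⟩ with he₁
  set e₂ : G.edgeSet := ⟨s(y, z), hyz⟩ with he₂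
  have hne : e₁ ≠ e₂ := by
    intro h
    rw [he₁, he₂] at h
    have h : s(x, y) = s(y, z) := congrArg Subtype.val h
    rw [Sym2.eq_iff] at h
    rcases h with ⟨h1, h2⟩ | ⟨h1, h2⟩
    · exact hxy.ne h1
    · exact hxz h1
  set t : Finset (V ⊕ G.edgeSet) := {Sum.inr e₁, Sum.inr e₂, Sum.inl y} with ht
  have htT : t ∈ T := by
    rw [hTdef, Set.mem_setOf_eq, ht, SimpleGraph.is3Clique_triple_iff]
    refine ⟨⟨hne, y, ?_, ?_⟩, ?_, ?_⟩
    · show y ∈ s(x, y); simp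
    · show y ∈ s(y, z); simp
    · show y ∈ s(x, y); simp
    · show y ∈ s(y, z); simp
  have htn : t ∉ Set.range f := by
    rintro ⟨e, heq⟩
    obtain ⟨u, v, _, _, hfe⟩ := hf e
    have h1 : (Sum.inr e₁ : V ⊕ G.edgeSet) ∈ f e := by rw [heq, ht]; simp
    have h2 : (Sum.inr e₂ : V ⊕ G.edgeSet) ∈ f e := by rw [heq, ht]; simp
    rw [hfe] at h1 h2
    simp only [Finset.mem_insert, Finset.mem_singleton] at h1 h2
    rcases h1 with h1 | h1 | h1 <;> rcases h2 with h2 | h2 | h2 <;>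
      simp_all
  -- conclude
  have hfinT : T.Finite := Set.toFinite T
  have hcard_eq : G.edgeSet.ncard = (Set.range f).ncard := by
    rw [← Set.image_univ, Set.ncard_image_of_injective _ hinj, Set.ncard_univ,
      Nat.card_coe_set_eq]
  rw [hcard_eq]
  exact Set.ncard_lt_ncard ⟨hrange, fun h => htn (h htT)⟩ hfinT
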